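/- arXiv:1005.2988 — 3 statements merged into one kernel-verified Lean document; each statement's English description precedes it below -/
import Mathlib

section
/- Let T(t) be a hypercyclic strongly continuous semigroup on a Banach space B with generator A. Then the dual (adjoint) operator A' has empty point spectrum: there is no nonzero φ ∈ B' and λ ∈ ℂ with A'φ = λφ. -/
open Filter Topology intervalIntegral
open scoped NNReal

/-- If `T(t)` is a hypercyclic strongly continuous semigroup on a Banach space `B` with
generator `A` (with domain `domA`, characterized by convergence of the difference quotients),
then the dual operator `A'` has empty point spectrum: there is no nonzero continuous linear
functional `φ` and `λ ∈ ℂ` with `A'φ = λφ`, i.e. with `φ(Af) = λ·φ(f)` for all `f ∈ dom(A)`. -/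
theorem adjoint_generator_empty_point_spectrum_of_hypercyclic
    {B : Type*} [NormedAddCommGroup B] [NormedSpace ℂ B] [CompleteSpace B]
    (T : ℝ≥0 → B →L[ℂ] B)
    (hT0 : T 0 = ContinuousLinearMap.id ℂ B)
    (hTadd : ∀ s t : ℝ≥0, T (s + t) = (T s).comp (T t))
    (hTcont : ∀ f : B, Continuous fun t : ℝ≥0 => T t f)
    (domA : Set B) (A : B → B)
    (hdom : ∀ f : B, f ∈ domA ↔
      ∃ g : B, Tendsto (fun t : ℝ≥0 => ((t : ℝ))⁻¹ • (T t f - f)) (𝓝[>] 0) (𝓝 g))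
    (hA : ∀ f ∈ domA,
      Tendsto (fun t : ℝ≥0 => ((t : ℝ))⁻¹ • (T t f - f)) (𝓝[>] 0) (𝓝 (A f)))
    (hhyp : ∃ f : B, Dense (Set.range fun t : ℝ≥0 => T t f)) :
    ¬ ∃ (φ : B →L[ℂ] ℂ) (lam : ℂ), φ ≠ 0 ∧ ∀ f ∈ domA, φ (A f) = lam * φ f := by
  rintro ⟨φ, lam, hφ, heig⟩
  obtain ⟨f, hf⟩ := hhyp
  -- the orbit as a function of a real variable
  set o : ℝ → B := fun r => T r.toNNReal f with ho
  have hocont : Continuous o := (hTcont f).comp continuous_real_toNNReal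
  have hint : ∀ a b : ℝ, IntervalIntegrable o MeasureTheory.volume a b :=
    fun a b => hocont.intervalIntegrable a b
  have ho0 : o 0 = f := by simp [ho, hT0]
  have hocoe : ∀ t : ℝ≥0, o (t : ℝ) = T t f := by
    intro t; simp [ho, Real.toNNReal_coe]
  -- coercion ℝ≥0 → ℝ respects the right-neighborhood filters at 0
  have hcoe : Tendsto (fun t : ℝ≥0 => (t : ℝ)) (𝓝[>] (0 : ℝ≥0)) (𝓝[>] (0 : ℝ)) := by
    refine tendsto_nhdsWithin_of_tendsto_nhds_of_eventually_within _ ?_ ?_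
    · simpa using (NNReal.continuous_coe.tendsto 0).mono_left nhdsWithin_le_nhds
    · filter_upwards [self_mem_nhdsWithin] with t ht
      exact_mod_cast ht
  -- semigroup law in real form
  have hoadd : ∀ r : ℝ, 0 ≤ r → ∀ t : ℝ≥0, T t (o r) = o (r + (t : ℝ)) := by
    intro r hr t
    have h1 : (r + (t : ℝ)).toNNReal = t + r.toNNReal := by
      rw [Real.toNNReal_add hr t.coe_nonneg, Real.toNNReal_coe, add_comm]
    show T t (T r.toNNReal f) = T (r + (t : ℝ)).toNNReal f
    rw [h1, hTadd]
    rfl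
  -- difference quotient limit for right limits at 0 (at an arbitrary base point s)
  have hquot : ∀ s : ℝ, Tendsto (fun x : ℝ => x⁻¹ • ∫ r in s..s + x, o r)
      (𝓝[>] (0 : ℝ)) (𝓝 (o s)) := by
    intro s
    have h2 : HasDerivAt (fun x => ∫ r in s..x, o r) (o s) s :=
      intervalIntegral.integral_hasDerivAt_right (hint s s)
        (hocont.stronglyMeasurableAtFilter _ _) hocont.continuousAt
    have hshift : Tendsto (fun x : ℝ => s + x) (𝓝[>] (0 : ℝ)) (𝓝[≠] s) := by
      refine tendsto_nhdsWithin_of_tendsto_nhds_of_eventually_within _ ?_ ?_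
      · simpa using ((continuous_add_left s).tendsto 0).mono_left
          (nhdsWithin_le_nhds (s := Set.Ioi (0:ℝ)))
      · filter_upwards [self_mem_nhdsWithin] with x hx
        simp only [Set.mem_compl_iff, Set.mem_singleton_iff]
        intro h
        have : x = 0 := by linarith [congrArg id h]
        exact absurd this (ne_of_gt hx)
    have := (hasDerivAt_iff_tendsto_slope.mp h2).comp hshift
    refine this.congr fun x => ?_
    simp [slope, intervalIntegral.integral_same]
  -- key identity: for s ≥ 0 the integral of the orbit lies in dom A
  have key : ∀ s : ℝ, 0 ≤ s →
      φ (o s) - φ f = lam * ∫ r in (0:ℝ)..s, φ (o r) := by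
    intro s hs
    set F : B := ∫ r in (0:ℝ)..s, o r with hFdef
    -- identity for the translated integral
    have step1 : ∀ t : ℝ≥0,
        T t F - F = (∫ r in s..s + (t : ℝ), o r) - ∫ r in (0:ℝ)..(t : ℝ), o r := by
      intro t
      have e0 : T t F = ∫ r in (0:ℝ)..s, T t (o r) :=
        ((T t).intervalIntegral_comp_comm (hint 0 s)).symm
      have e1 : (∫ r in (0:ℝ)..s, T t (o r)) = ∫ r in (0:ℝ)..s, o (r + (t : ℝ)) := by
        refine intervalIntegral.integral_congr fun r hr => ?_
        rw [Set.uIcc_of_le hs] at hr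
        exact hoadd r hr.1 t
      have e2 : (∫ r in (0:ℝ)..s, o (r + (t : ℝ)))
          = ∫ r in (t : ℝ)..s + (t : ℝ), o r := by
        rw [intervalIntegral.integral_comp_add_right, zero_add]
      have a1 : (∫ r in (0:ℝ)..(t:ℝ), o r) + ∫ r in (t:ℝ)..s + (t:ℝ), o r
          = ∫ r in (0:ℝ)..s + (t:ℝ), o r :=
        intervalIntegral.integral_add_adjacent_intervals (hint _ _) (hint _ _)
      have a2 : (∫ r in (0:ℝ)..s, o r) + ∫ r in s..s + (t:ℝ), o r
          = ∫ r in (0:ℝ)..s + (t:ℝ), o r :=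
        intervalIntegral.integral_add_adjacent_intervals (hint _ _) (hint _ _)
      rw [e0, e1, e2, hFdef]
      rw [sub_eq_sub_iff_add_eq_add]
      rw [add_comm] at a1
      rw [a1, a2.symm]
      abel
    -- the limit of the difference quotient is o s - f
    have hlim0 : Tendsto (fun x : ℝ =>
        x⁻¹ • ((∫ r in s..s + x, o r) - ∫ r in (0:ℝ)..x, o r))
        (𝓝[>] (0 : ℝ)) (𝓝 (o s - f)) := by
      have h1 := hquot 0
      have h1' : Tendsto (fun x : ℝ => x⁻¹ • ∫ r in (0:ℝ)..x, o r)
          (𝓝[>] (0:ℝ)) (𝓝 f) := by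
        rw [← ho0]
        refine h1.congr fun x => ?_
        rw [zero_add]
      have := (hquot s).sub h1'
      refine this.congr fun x => ?_
      rw [smul_sub]
    have hFlim : Tendsto (fun t : ℝ≥0 => ((t : ℝ))⁻¹ • (T t F - F))
        (𝓝[>] (0:ℝ≥0)) (𝓝 (o s - f)) := by
      refine (hlim0.comp hcoe).congr fun t => ?_
      simp only [Function.comp]
      rw [step1 t]
    have hFmem : F ∈ domA := (hdom F).mpr ⟨_, hFlim⟩
    have hAF : A F = o s - f := tendsto_nhds_unique (hA F hFmem) hFlim
    have := heig F hFmem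
    rw [hAF] at this
    rw [map_sub] at this
    rw [this, hFdef, φ.intervalIntegral_comp_comm (hint 0 s)]
  -- φ along the orbit
  set u : ℝ → ℂ := fun r => φ (o r) with hu
  have hucont : Continuous u := φ.continuous.comp hocont
  have huint : ∀ a b : ℝ, IntervalIntegrable u MeasureTheory.volume a b :=
    fun a b => hucont.intervalIntegrable a b
  set U : ℝ → ℂ := fun s => φ f + lam * ∫ r in (0:ℝ)..s, u r with hU
  have hUderiv : ∀ s : ℝ, HasDerivAt U (lam * u s) s := by
    intro s
    have := intervalIntegral.integral_hasDerivAt_right (huint 0 s)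
      (hucont.stronglyMeasurableAtFilter _ _) hucont.continuousAt
    exact (this.const_mul lam).const_add (φ f)
  have hUcont : Continuous U := by
    have : Differentiable ℝ U := fun s => (hUderiv s).differentiableAt
    exact this.continuous
  have hUu : ∀ s : ℝ, 0 ≤ s → U s = u s := by
    intro s hs
    have := key s hs
    rw [hU, hu]
    simp only
    rw [← this]
    ring
  -- exponential solution
  set w : ℝ → ℂ := fun s => Complex.exp (-(lam * s)) * U s with hw
  have hwderiv : ∀ s : ℝ, 0 ≤ s → HasDerivAt w 0 s := by
    intro s hs
    have hc : HasDerivAt (fun z : ℂ => Complex.exp (-(lam * z)))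
        (Complex.exp (-(lam * (s:ℂ))) * (-lam)) (s : ℂ) := by
      have : HasDerivAt (fun z : ℂ => -(lam * z)) (-lam) (s : ℂ) := by
        simpa [Pi.neg_def] using ((hasDerivAt_id' (s:ℂ)).const_mul lam).neg
      exact this.cexp
    have he : HasDerivAt (fun x : ℝ => Complex.exp (-(lam * x)))
        (Complex.exp (-(lam * (s:ℂ))) * (-lam)) s := hc.comp_ofReal
    have := he.mul (hUderiv s)
    have h0 : Complex.exp (-(lam * (s:ℂ))) * (-lam) * U s
        + Complex.exp (-(lam * (s:ℂ))) * (lam * u s) = 0 := by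
      rw [← hUu s hs]; ring
    rw [h0] at this
    exact this
  have hwcont : Continuous w :=
    ((Complex.continuous_exp.comp ((continuous_const.mul Complex.continuous_ofReal).neg))).mul hUcont
  have hwconst : ∀ s : ℝ, 0 ≤ s → w s = w 0 := by
    intro s hs
    exact constant_of_has_deriv_right_zero (hwcont.continuousOn)
      (fun x hx => (hwderiv x hx.1).hasDerivWithinAt) s ⟨hs, le_rfl⟩
  have hw0 : w 0 = φ f := by
    simp [hw, hU]
  -- the orbit functional values
  have hval : ∀ t : ℝ≥0, φ (T t f) = Complex.exp (lam * t) * φ f := by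
    intro t
    have h1 : Complex.exp (-(lam * (t:ℝ))) * U (t:ℝ) = φ f := (hwconst _ t.coe_nonneg).trans hw0
    have h2 : U (t:ℝ) = φ (T t f) := by
      rw [hUu _ t.coe_nonneg, hu]
      simp only
      rw [hocoe]
    rw [h2] at h1
    have h3 := congrArg (fun z => Complex.exp (lam * (t:ℝ)) * z) h1
    try simp only at h3
    rw [← mul_assoc, ← Complex.exp_add] at h3
    simp only [add_neg_cancel, Complex.exp_zero, one_mul] at h3
    exact h3
  -- density of the image of the orbit under φ
  have hsurj : Function.Surjective φ := by
    have hx : ∃ x : B, φ x ≠ 0 := by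
      by_contra h
      push_neg at h
      exact hφ (ContinuousLinearMap.ext fun x => by simp [h x])
    obtain ⟨x, hx⟩ := hx
    intro z
    refine ⟨(z / φ x) • x, ?_⟩
    rw [map_smul]
    simp [div_mul_cancel₀ _ hx]
  have hd : DenseRange fun t : ℝ≥0 => φ (T t f) :=
    (hsurj.denseRange.comp hf φ.continuous : DenseRange (φ ∘ fun t : ℝ≥0 => T t f))
  set c : ℂ := φ f with hc
  have hnorm : ∀ t : ℝ≥0, ‖φ (T t f)‖ = Real.exp (lam.re * t) * ‖c‖ := by
    intro t
    rw [hval t, norm_mul, Complex.norm_exp]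
    congr 2
    simp [Complex.mul_re]
  by_cases hc0 : c = 0
  · obtain ⟨t, ht⟩ := hd.exists_dist_lt (1 : ℂ) (by norm_num : (0:ℝ) < 1/2)
    have : ‖φ (T t f)‖ = 0 := by rw [hnorm t, hc0, norm_zero, mul_zero]
    rw [dist_eq_norm] at ht
    have h4 : (1:ℝ) ≤ ‖(1:ℂ) - φ (T t f)‖ := by
      calc (1:ℝ) = ‖(1:ℂ)‖ - ‖φ (T t f)‖ := by rw [this]; simp
      _ ≤ ‖(1:ℂ) - φ (T t f)‖ := norm_sub_norm_le _ _
    linarith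
  · have hcpos : 0 < ‖c‖ := norm_pos_iff.mpr hc0
    rcases le_or_gt lam.re 0 with hre | hre
    · -- norms bounded by ‖c‖; the point 2‖c‖+1 is far from the range
      obtain ⟨t, ht⟩ := hd.exists_dist_lt (((2 * ‖c‖ + 1 : ℝ)) : ℂ) (by norm_num : (0:ℝ) < 1)
      have hb : ‖φ (T t f)‖ ≤ ‖c‖ := by
        rw [hnorm t]
        have : Real.exp (lam.re * t) ≤ 1 :=
          Real.exp_le_one_iff.mpr (mul_nonpos_of_nonpos_of_nonneg hre t.coe_nonneg)
        nlinarith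
      rw [dist_eq_norm] at ht
      have hz : ‖(((2 * ‖c‖ + 1 : ℝ)) : ℂ)‖ = 2 * ‖c‖ + 1 := by
        rw [Complex.norm_real, Real.norm_eq_abs, abs_of_nonneg (by positivity)]
      have h4 : ‖c‖ + 1 ≤ ‖(((2 * ‖c‖ + 1 : ℝ)) : ℂ) - φ (T t f)‖ := by
        calc ‖c‖ + 1 = (2 * ‖c‖ + 1) - ‖c‖ := by ring
        _ ≤ ‖(((2 * ‖c‖ + 1 : ℝ)) : ℂ)‖ - ‖φ (T t f)‖ := by rw [hz]; linarith
        _ ≤ _ := norm_sub_norm_le _ _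
      linarith
    · -- norms bounded below by ‖c‖; 0 is far from the range
      obtain ⟨t, ht⟩ := hd.exists_dist_lt (0 : ℂ) hcpos
      have hb : ‖c‖ ≤ ‖φ (T t f)‖ := by
        rw [hnorm t]
        have : (1:ℝ) ≤ Real.exp (lam.re * t) :=
          Real.one_le_exp (mul_nonneg hre.le t.coe_nonneg)
        nlinarith
      rw [dist_eq_norm, zero_sub, norm_neg] at ht
      linarith
end

section
/- Fix ρ > 0 and p ∈ (1, ∞). Every point of the parabolic region P_p = { ρ² − z² : z ∈ ℂ, |Re z| ≤ ρ·|2/p − 1| } lies in the closed sector Σ_p = { w ∈ ℂ \ {0} : |arg w| ≤ arctan(|p−2| / (2√(p−1))) } ∪ {0}; moreover the boundary parabola of P_p is tangent to the boundary rays of Σ_p. -/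
/-- The parabolic region `P_p = {ρ² − z² : z ∈ ℂ, |Re z| ≤ ρ|2/p − 1|}`. -/
def parabolicRegion (ρ p : ℝ) : Set ℂ :=
  {w : ℂ | ∃ z : ℂ, |z.re| ≤ ρ * |2 / p - 1| ∧ w = (ρ : ℂ) ^ 2 - z ^ 2}

lemma arg_eq_arctan_of_re_pos {w : ℂ} (h : 0 < w.re) :
    Complex.arg w = Real.arctan (w.im / w.re) := by
  rw [← Complex.tan_arg, Real.arctan_tan]
  · exact Complex.neg_pi_div_two_lt_arg_iff.mpr (Or.inl h)
  · exact Complex.arg_lt_pi_div_two_iff.mpr (Or.inl h)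

lemma abs_arctan' (u : ℝ) : |Real.arctan u| = Real.arctan |u| := by
  rcases le_or_gt 0 u with hu | hu
  · rw [abs_of_nonneg hu, abs_of_nonneg]
    rw [← Real.arctan_zero]
    exact Real.arctan_strictMono.monotone hu
  · have h : Real.arctan u < 0 := by
      rw [← Real.arctan_zero]; exact Real.arctan_strictMono hu
    rw [abs_of_neg hu, abs_of_neg h, Real.arctan_neg]

/-- Weighted AM-GM step, for nonnegative reals. -/
lemma amgm_step (t A x y : ℝ) (ht : 0 ≤ t) (hA : 0 ≤ A) (hx : 0 ≤ x) (hy : 0 ≤ y)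
    (hk : x ^ 2 ≤ t ^ 2 * A) : 2 * x * y ≤ t * (A + y ^ 2) := by
  have h1 : (2 * x * y) ^ 2 ≤ (t * (A + y ^ 2)) ^ 2 := by
    nlinarith [mul_le_mul_of_nonneg_right hk (by positivity : (0:ℝ) ≤ 4 * y ^ 2),
      sq_nonneg (t * (A - y ^ 2))]
  nlinarith [h1, mul_nonneg hx hy, mul_nonneg ht (by positivity : (0:ℝ) ≤ A + y ^ 2)]

/-- On the parabolic region, the real part is positive and `|Im w| ≤ t · Re w`. -/
lemma parabolic_key (ρ p : ℝ) (hρ : 0 < ρ) (hp : 1 < p) {w : ℂ}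
    (hw : w ∈ parabolicRegion ρ p) :
    0 < w.re ∧ |w.im| ≤ (|p - 2| / (2 * Real.sqrt (p - 1))) * w.re := by
  obtain ⟨z, hz, rfl⟩ := hw
  set t : ℝ := |p - 2| / (2 * Real.sqrt (p - 1)) with htdef
  set x := z.re with hxd
  set y := z.im with hyd
  have hp1 : (0:ℝ) < p - 1 := by linarith
  have hs : 0 < Real.sqrt (p - 1) := Real.sqrt_pos.mpr hp1
  have ht0 : 0 ≤ t := by positivity
  have ht2' : t ^ 2 = (p - 2) ^ 2 / (4 * (p - 1)) := by
    rw [htdef, div_pow, mul_pow, Real.sq_sqrt hp1.le, sq_abs]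
    norm_num
  have hpp : (0:ℝ) < p := by linarith
  have hcabs : |2 / p - 1| = |p - 2| / p := by
    rw [show 2 / p - 1 = -((p - 2) / p) by field_simp; ring, abs_neg, abs_div, abs_of_pos hpp]
  have h1' : |x| * p ≤ ρ * |p - 2| := by
    rw [hcabs] at hz
    calc |x| * p ≤ (ρ * (|p - 2| / p)) * p := by nlinarith [hz, hpp]
      _ = ρ * |p - 2| := by field_simp
  have hx2 : x ^ 2 * p ^ 2 ≤ ρ ^ 2 * (p - 2) ^ 2 := by
    nlinarith [mul_self_le_mul_self (by positivity : (0:ℝ) ≤ |x| * p) h1',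
      sq_abs x, sq_abs (p - 2)]
  -- main algebraic fact: x² ≤ t² (ρ² − x²)
  have hkey : x ^ 2 ≤ t ^ 2 * (ρ ^ 2 - x ^ 2) := by
    rw [ht2', div_mul_eq_mul_div, le_div_iff₀ (by linarith : (0:ℝ) < 4 * (p - 1))]
    nlinarith [hx2]
  have hre : ((ρ:ℂ) ^ 2 - z ^ 2).re = ρ ^ 2 - x ^ 2 + y ^ 2 := by
    simp [pow_two, Complex.mul_re, Complex.mul_im]
    ring
  have him : ((ρ:ℂ) ^ 2 - z ^ 2).im = -(2 * x * y) := by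
    simp [pow_two, Complex.mul_re, Complex.mul_im]
    ring
  have hA : 0 < ρ ^ 2 - x ^ 2 := by
    nlinarith [sq_nonneg t, mul_pos hρ hρ]
  constructor
  · rw [hre]; nlinarith [sq_nonneg y]
  · rw [hre, him, abs_neg]
    have hstep := amgm_step t (ρ ^ 2 - x ^ 2) |x| |y| ht0 hA.le (abs_nonneg x)
      (abs_nonneg y) (by rwa [sq_abs])
    calc |2 * x * y| = 2 * |x| * |y| := by
          rw [abs_mul, abs_mul]; norm_num
      _ ≤ t * (ρ ^ 2 - x ^ 2 + y ^ 2) := by rwa [sq_abs] at hstep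

/-- A point of the parabolic region where `|Im w| = t · Re w` is on the frontier. -/
lemma mem_frontier_of_eq (ρ p : ℝ) (hρ : 0 < ρ) (hp : 1 < p) {w₀ : ℂ}
    (hmem : w₀ ∈ parabolicRegion ρ p) (him0neg : w₀.im ≤ 0)
    (heq : |w₀.im| = (|p - 2| / (2 * Real.sqrt (p - 1))) * w₀.re) :
    w₀ ∈ frontier (parabolicRegion ρ p) := by
  rw [frontier, Set.mem_diff]
  refine ⟨subset_closure hmem, ?_⟩
  intro hint
  obtain ⟨ε, hε, hball⟩ := Metric.isOpen_iff.mp isOpen_interior w₀ hint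
  have hball' : Metric.ball w₀ ε ⊆ parabolicRegion ρ p := hball.trans interior_subset
  have hw1mem : w₀ - Complex.I * (ε / 2) ∈ parabolicRegion ρ p := by
    apply hball'
    rw [Metric.mem_ball]
    simp only [dist_eq_norm]
    rw [show w₀ - Complex.I * (ε / 2) - w₀ = -(Complex.I * (ε / 2)) by ring,
      norm_neg, norm_mul]
    simp [abs_of_pos hε]
    linarith
  obtain ⟨hre1, him1⟩ := parabolic_key ρ p hρ hp hw1mem
  have hre1' : (w₀ - Complex.I * (ε / 2)).re = w₀.re := by simp
  have him1' : (w₀ - Complex.I * (ε / 2)).im = w₀.im - ε / 2 := by simp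
  rw [hre1', him1'] at him1
  rw [abs_of_nonpos (by linarith)] at him1
  rw [abs_of_nonpos him0neg] at heq
  linarith

/-- For `ρ > 0` and `p ∈ (1,∞)`, the parabolic region `P_p` is contained in the closed sector
`Σ_p = {w ≠ 0 : |arg w| ≤ arctan(|p−2|/(2√(p−1)))} ∪ {0}`, and the boundary parabola of `P_p`
is tangent to the boundary rays of `Σ_p`: some nonzero boundary point of `P_p` has argument of
absolute value exactly `arctan(|p−2|/(2√(p−1)))`. -/
theorem parabolic_region_subset_sector_and_tangent
    (ρ p : ℝ) (hρ : 0 < ρ) (hp : 1 < p) :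
    parabolicRegion ρ p ⊆
      {w : ℂ | w = 0 ∨ |Complex.arg w| ≤ Real.arctan (|p - 2| / (2 * Real.sqrt (p - 1)))} ∧
    ∃ w ∈ frontier (parabolicRegion ρ p), w ≠ 0 ∧
      |Complex.arg w| = Real.arctan (|p - 2| / (2 * Real.sqrt (p - 1))) := by
  have hp1 : (0:ℝ) < p - 1 := by linarith
  have hs : 0 < Real.sqrt (p - 1) := Real.sqrt_pos.mpr hp1
  have ht0 : (0:ℝ) ≤ |p - 2| / (2 * Real.sqrt (p - 1)) := by positivity
  have ht2' : (|p - 2| / (2 * Real.sqrt (p - 1))) ^ 2 = (p - 2) ^ 2 / (4 * (p - 1)) := by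
    rw [div_pow, mul_pow, Real.sq_sqrt hp1.le, sq_abs]
    norm_num
  constructor
  · intro w hw
    obtain ⟨hre, him⟩ := parabolic_key ρ p hρ hp hw
    right
    rw [arg_eq_arctan_of_re_pos hre, abs_arctan', abs_div, abs_of_pos hre]
    exact Real.arctan_strictMono.monotone ((div_le_iff₀ hre).mpr him)
  · -- tangency point
    have hpp : (0:ℝ) < p := by linarith
    have hpne : p ≠ 0 := hpp.ne'
    set c : ℝ := |2 / p - 1| with hcdef
    have hc0 : 0 ≤ c := abs_nonneg _
    have hcabs : c = |p - 2| / p := by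
      rw [hcdef, show 2 / p - 1 = -((p - 2) / p) by field_simp; ring, abs_neg, abs_div, abs_of_pos hpp]
    have hc1 : c < 1 := by
      rw [hcabs, div_lt_one hpp]
      rcases abs_cases (p - 2) with ⟨h, _⟩ | ⟨h, _⟩ <;> linarith
    set s : ℝ := Real.sqrt (1 - c ^ 2) with hsdef
    have hs2 : s ^ 2 = 1 - c ^ 2 := Real.sq_sqrt (by nlinarith)
    have hs0 : 0 < s := Real.sqrt_pos.mpr (by nlinarith)
    have hc2 : c ^ 2 = (p - 2) ^ 2 / p ^ 2 := by rw [hcabs, div_pow, sq_abs]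
    -- c = t * s
    have hts : c = |p - 2| / (2 * Real.sqrt (p - 1)) * s := by
      have h1 : c ^ 2 = (|p - 2| / (2 * Real.sqrt (p - 1)) * s) ^ 2 := by
        rw [mul_pow, hs2, ht2', hc2]
        field_simp
        ring
      have h2 : 0 ≤ |p - 2| / (2 * Real.sqrt (p - 1)) * s := by positivity
      nlinarith [h1, hc0, h2]
    set z₀ : ℂ := ⟨ρ * c, ρ * s⟩ with hz0
    have hz0re : z₀.re = ρ * c := rfl
    have hz0im : z₀.im = ρ * s := rfl
    have hmem : (ρ : ℂ) ^ 2 - z₀ ^ 2 ∈ parabolicRegion ρ p := by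
      refine ⟨z₀, ?_, rfl⟩
      rw [hz0re, abs_of_nonneg (by positivity), hcdef]
    have hre0 : ((ρ : ℂ) ^ 2 - z₀ ^ 2).re = 2 * ρ ^ 2 * s ^ 2 := by
      simp [pow_two, Complex.mul_re, Complex.mul_im, hz0re, hz0im]
      nlinarith [hs2]
    have him0 : ((ρ : ℂ) ^ 2 - z₀ ^ 2).im = -(2 * ρ ^ 2 * c * s) := by
      simp [pow_two, Complex.mul_re, Complex.mul_im, hz0re, hz0im]
      ring
    have hrepos : 0 < ((ρ : ℂ) ^ 2 - z₀ ^ 2).re := by rw [hre0]; positivity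
    have hne : (ρ : ℂ) ^ 2 - z₀ ^ 2 ≠ 0 := fun h => by simp [h] at hrepos
    have him0neg : ((ρ : ℂ) ^ 2 - z₀ ^ 2).im ≤ 0 := by
      rw [him0]
      exact neg_nonpos.mpr (by positivity)
    have heq : |((ρ : ℂ) ^ 2 - z₀ ^ 2).im|
        = |p - 2| / (2 * Real.sqrt (p - 1)) * ((ρ : ℂ) ^ 2 - z₀ ^ 2).re := by
      rw [him0, hre0, abs_neg, abs_of_nonneg (by positivity), hts]
      ring
    refine ⟨(ρ : ℂ) ^ 2 - z₀ ^ 2, mem_frontier_of_eq ρ p hρ hp hmem him0neg heq, hne, ?_⟩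
    rw [arg_eq_arctan_of_re_pos hrepos, abs_arctan', abs_div, abs_of_pos hrepos,
      heq, mul_div_assoc, div_self hrepos.ne', mul_one]
end

section
/- Let M₁, M₂ be sets with operators whose L^p spectra are σ₁, σ₂ ⊆ ℂ, and suppose the L^p spectrum of the product satisfies σ(Δ_{M₁×M₂,p}) = σ₁ + σ₂ := {a + b : a ∈ σ₁, b ∈ σ₂}. Prove the following elementary consequence used in the paper: if σ₁ ⊇ P₁ and σ₂ ⊇ P₂ for parabolic regions P₁ = {ρ₁² − z² : |Re z| ≤ ρ₁δ} and P₂ = {ρ₂² − z² : |Re z| ≤ ρ₂δ} with δ = |2/p − 1| and ρ₁, ρ₂ > 0, then σ₁ + σ₂ ⊇ P where P = {(ρ₁² + ρ₂²) − z² : z ∈ ℂ, |Re z| ≤ √(ρ₁² + ρ₂²)·δ}. -/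
/-- If the `L^p` spectra `σ₁, σ₂` of the factors contain the parabolic regions
`P(ρᵢ, δ) = {ρᵢ² − z² : |Re z| ≤ ρᵢδ}` with `δ = |2/p − 1|`, then the set-theoretic sum
`σ₁ + σ₂` (which is the `L^p` spectrum of the Riemannian product) contains the parabolic
region `P(√(ρ₁² + ρ₂²), δ)`. -/
theorem parabolic_region_subset_sum_of_spectra
    (p : ℝ) (hp : 1 ≤ p) (δ ρ₁ ρ₂ : ℝ) (hδ : δ = |2 / p - 1|)
    (hρ₁ : 0 < ρ₁) (hρ₂ : 0 < ρ₂) (σ₁ σ₂ : Set ℂ)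
    (hs₁ : {w : ℂ | ∃ z : ℂ, |z.re| ≤ ρ₁ * δ ∧ w = (ρ₁ : ℂ) ^ 2 - z ^ 2} ⊆ σ₁)
    (hs₂ : {w : ℂ | ∃ z : ℂ, |z.re| ≤ ρ₂ * δ ∧ w = (ρ₂ : ℂ) ^ 2 - z ^ 2} ⊆ σ₂) :
    {w : ℂ | ∃ z : ℂ, |z.re| ≤ Real.sqrt (ρ₁ ^ 2 + ρ₂ ^ 2) * δ ∧
        w = ((ρ₁ ^ 2 + ρ₂ ^ 2 : ℝ) : ℂ) - z ^ 2} ⊆ {w : ℂ | ∃ a ∈ σ₁, ∃ b ∈ σ₂, w = a + b} := by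
  set ρ : ℝ := Real.sqrt (ρ₁ ^ 2 + ρ₂ ^ 2) with hρdef
  have hsum : 0 < ρ₁ ^ 2 + ρ₂ ^ 2 := by positivity
  have hρ : 0 < ρ := Real.sqrt_pos.mpr hsum
  have hρsq : ρ ^ 2 = ρ₁ ^ 2 + ρ₂ ^ 2 := Real.sq_sqrt hsum.le
  rintro w ⟨z, hz, rfl⟩
  refine ⟨(ρ₁ : ℂ) ^ 2 - ((ρ₁ / ρ : ℝ) * z) ^ 2, hs₁ ⟨(ρ₁ / ρ : ℝ) * z, ?_, rfl⟩,
    (ρ₂ : ℂ) ^ 2 - ((ρ₂ / ρ : ℝ) * z) ^ 2, hs₂ ⟨(ρ₂ / ρ : ℝ) * z, ?_, rfl⟩, ?_⟩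
  · have : ((ρ₁ / ρ : ℝ) * z).re = (ρ₁ / ρ) * z.re := by
      simp [Complex.mul_re]
    rw [this, abs_mul, abs_of_pos (by positivity : (0:ℝ) < ρ₁ / ρ)]
    calc ρ₁ / ρ * |z.re| ≤ ρ₁ / ρ * (ρ * δ) := by
          apply mul_le_mul_of_nonneg_left hz (by positivity)
      _ = ρ₁ * δ := by field_simp
  · have : ((ρ₂ / ρ : ℝ) * z).re = (ρ₂ / ρ) * z.re := by
      simp [Complex.mul_re]
    rw [this, abs_mul, abs_of_pos (by positivity : (0:ℝ) < ρ₂ / ρ)]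
    calc ρ₂ / ρ * |z.re| ≤ ρ₂ / ρ * (ρ * δ) := by
          apply mul_le_mul_of_nonneg_left hz (by positivity)
      _ = ρ₂ * δ := by field_simp
  · have hρC : (ρ : ℂ) ≠ 0 := by exact_mod_cast hρ.ne'
    have hρsqC : (ρ : ℂ) ^ 2 = (ρ₁ : ℂ) ^ 2 + (ρ₂ : ℂ) ^ 2 := by exact_mod_cast hρsq
    push_cast
    field_simp
    linear_combination (-(z ^ 2)) * hρsqC
end
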